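/- Let 𝒜 be a Hilbert evolution algebra with a natural orthonormal basis {e_i}_{i∈ℕ}. If U ⊆ ℕ and I := the closed linear span of {e_k : k ∈ U}, then for every n ∈ ℕ one has I^{<n>} ⊆ closed linear span of {e_k : k ∈ D^{n-1}(U)}. -/

import Mathlib

noncomputable section

open scoped ENat

/-! ### Digraph notions associated to a matrix of structural constants

The associated digraph `G(𝒜,𝓑)` has vertex set `ℕ` and a directed edge `(i,k)` iff
`ω i k ≠ 0`. -/

/-- `DsetU ω m U` is the set `D^m(U)` of `m`-th generation descendants of `U`:
`D^0(U) = U` and `D^{m+1}(U) = {k | ∃ i ∈ D^m(U), ω i k ≠ 0}`. -/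
def DsetU (ω : ℕ → ℕ → ℂ) : ℕ → Set ℕ → Set ℕ
  | 0, U => U
  | m + 1, U => {k | ∃ i ∈ DsetU ω m U, ω i k ≠ 0}

/-- `Dm ω m i = D^m(i)`, the `m`-th generation descendants of the vertex `i`. -/
def Dm (ω : ℕ → ℕ → ℂ) (m i : ℕ) : Set ℕ := DsetU ω m {i}

/-- `Desc ω i = D(i) = ⋃_{m ≥ 1} D^m(i)`, the set of descendants of `i`. -/
def Desc (ω : ℕ → ℕ → ℂ) (i : ℕ) : Set ℕ := ⋃ m ∈ {m : ℕ | 1 ≤ m}, Dm ω m i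

/-- `gdist ω i u` is the length of a shortest directed path (walk) from `i` to `u`. -/
def gdist (ω : ℕ → ℕ → ℂ) (i u : ℕ) : ℕ := sInf {n : ℕ | u ∈ Dm ω n i}

/-- The depth `δ(G_i) = sup {dist(i,u) : u ∈ D(i)}` of the subgraph `G_i` induced on the
descendants of `i`, as an extended natural number (`⊤` when unbounded). -/
def depth (ω : ℕ → ℕ → ℂ) (i : ℕ) : ℕ∞ := ⨆ u ∈ Desc ω i, (gdist ω i u : ℕ∞)

/-- `p 0, p 1, …, p n` is an oriented cycle: a non-empty directed path in which the only
repeated vertices are the first and the last one. -/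
def IsOrientedCycle (ω : ℕ → ℕ → ℂ) (n : ℕ) (p : ℕ → ℕ) : Prop :=
  0 < n ∧ (∀ m < n, ω (p m) (p (m + 1)) ≠ 0) ∧ p n = p 0 ∧
    ∀ a b, a < b → b < n → p a ≠ p b

/-- The digraph associated to `ω` contains an oriented cycle. -/
def HasOrientedCycle (ω : ℕ → ℕ → ℂ) : Prop := ∃ n p, IsOrientedCycle ω n p

/-! ### Algebra notions -/

variable {H : Type*} [NormedAddCommGroup H] [InnerProductSpace ℂ H] [CompleteSpace H]

/-- The structural constants of a Hilbert evolution algebra with product `mul` relative to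
the natural orthonormal basis `e`: `ω i k` is the `k`-th coordinate of `e i · e i`,
so that `e i · e i = ∑'_k ω i k • e k`. -/
def structConst (mul : H →ₗ[ℂ] H →ₗ[ℂ] H) (e : HilbertBasis ℕ ℂ H) (i k : ℕ) : ℂ :=
  e.repr (mul (e i) (e i)) k

/-- Principal powers: `ppow mul v n = v^n` for `n ≥ 1` (with the junk value `v` at `n = 0`):
`v^1 = v` and `v^{n+1} = v^n · v`. -/
def ppow (mul : H →ₗ[ℂ] H →ₗ[ℂ] H) (v : H) : ℕ → H
  | 0 => v
  | 1 => v
  | n + 2 => mul (ppow mul v (n + 1)) v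

/-- The algebra is nil: every element has a vanishing principal power. -/
def IsNil (mul : H →ₗ[ℂ] H →ₗ[ℂ] H) : Prop := ∀ v : H, ∃ n : ℕ, 1 ≤ n ∧ ppow mul v n = 0

/-- The product `S·T` of two subspaces: the span of all products `x·y`, `x ∈ S`, `y ∈ T`. -/
def mulSub (mul : H →ₗ[ℂ] H →ₗ[ℂ] H) (S T : Submodule ℂ H) : Submodule ℂ H :=
  Submodule.span ℂ {z : H | ∃ x ∈ S, ∃ y ∈ T, z = mul x y}

/-- The powers `𝒜^n` (for `n ≥ 1`, with the junk value `⊤` at `n = 0`):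
`𝒜^1 = 𝒜` and `𝒜^{n+1} = ∑_{i=1}^{n} 𝒜^i 𝒜^{n+1-i}`. -/
def apow (mul : H →ₗ[ℂ] H →ₗ[ℂ] H) (n : ℕ) : Submodule ℂ H :=
  n.strongRecOn fun n ih =>
    match n, ih with
    | 0, _ => ⊤
    | 1, _ => ⊤
    | m + 2, ih =>
      ⨆ (i : ℕ) (h1 : 1 ≤ i) (h2 : i ≤ m + 1),
        mulSub mul (ih i (by omega)) (ih (m + 2 - i) (by omega))

/-- The algebra is nilpotent: `𝒜^n = 0` for some `n`. -/
def IsNilpotent' (mul : H →ₗ[ℂ] H →ₗ[ℂ] H) : Prop := ∃ n : ℕ, 1 ≤ n ∧ apow mul n = ⊥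

/-- The right powers `𝒜^{<n>}` (for `n ≥ 1`, with the junk value `⊤` at `n = 0`):
`𝒜^{<1>} = 𝒜` and `𝒜^{<n+1>} = 𝒜^{<n>}𝒜`. -/
def rapow (mul : H →ₗ[ℂ] H →ₗ[ℂ] H) : ℕ → Submodule ℂ H
  | 0 => ⊤
  | 1 => ⊤
  | n + 2 => mulSub mul (rapow mul (n + 1)) ⊤

/-- The algebra is right nilpotent: `𝒜^{<n>} = 0` for some `n`. -/
def IsRightNilpotent (mul : H →ₗ[ℂ] H →ₗ[ℂ] H) : Prop := ∃ n : ℕ, 1 ≤ n ∧ rapow mul n = ⊥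

/-- The index of right nilpotency `n_r(𝒜) = min {n : 𝒜^{<n>} = 0}`. -/
def rNilIndex (mul : H →ₗ[ℂ] H →ₗ[ℂ] H) : ℕ := sInf {n : ℕ | 1 ≤ n ∧ rapow mul n = ⊥}

/-- Powers of a subset `I ⊆ 𝒜` (for `n ≥ 1`, with the junk value `I` at `n = 0`):
`I^{<1>} = I` and `I^{<n+1>}` is the set of finite sums `∑_j x_j · y_j` with
`x_j ∈ I^{<n>}` and `y_j ∈ I`. -/
def setPow (mul : H →ₗ[ℂ] H →ₗ[ℂ] H) (I : Set H) : ℕ → Set H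
  | 0 => I
  | 1 => I
  | n + 2 => {v : H | ∃ (m : ℕ) (x y : Fin m → H),
      (∀ j, x j ∈ setPow mul I (n + 1)) ∧ (∀ j, y j ∈ I) ∧
        v = ∑ j, mul (x j) (y j)}

end

noncomputable section

variable {H : Type*} [NormedAddCommGroup H] [InnerProductSpace ℂ H] [CompleteSpace H]

theorem mem_closure_span_of_supp (e : HilbertBasis ℕ ℂ H) (S : Set ℕ) (x : H)
    (h : ∀ k, k ∉ S → e.repr x k = 0) :
    x ∈ ((Submodule.span ℂ ((fun k : ℕ => e k) '' S)).topologicalClosure : Set H) := by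
  have hs := e.hasSum_repr x
  refine mem_closure_of_tendsto hs (Filter.Eventually.of_forall fun F => ?_)
  refine Submodule.sum_mem _ fun k _ => ?_
  by_cases hk : k ∈ S
  · exact Submodule.smul_mem _ _ (Submodule.subset_span ⟨k, hk, rfl⟩)
  · simp [h k hk]

theorem mul_basis_eq (mul : H →ₗ[ℂ] H →ₗ[ℂ] H)
    (hcont : ∀ x : H, Continuous fun y => mul x y)
    (e : HilbertBasis ℕ ℂ H)
    (hnat : ∀ i j : ℕ, i ≠ j → mul (e i) (e j) = 0) (i : ℕ) (y : H) :
    mul (e i) y = e.repr y i • mul (e i) (e i) := by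
  have h1 : Continuous fun y : H => mul (e i) y := hcont (e i)
  have h2 : Continuous fun y : H => e.repr y i • mul (e i) (e i) := by
    have heq : (fun y : H => e.repr y i • mul (e i) (e i)) =
        fun y : H => (inner ℂ (e i) y : ℂ) • mul (e i) (e i) := by
      funext y; rw [e.repr_apply_apply]
    rw [heq]
    exact (continuous_const.inner continuous_id).smul continuous_const
  have hdense : Dense ((Submodule.span ℂ (Set.range (e : ℕ → H))) : Set H) :=
    Submodule.dense_iff_topologicalClosure_eq_top.mpr e.dense_span
  have key : ∀ z ∈ Submodule.span ℂ (Set.range (e : ℕ → H)),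
      mul (e i) z = e.repr z i • mul (e i) (e i) := by
    intro z hz
    induction hz using Submodule.span_induction with
    | mem z hz =>
      obtain ⟨j, rfl⟩ := hz
      by_cases hij : i = j
      · subst hij
        simp [e.repr_self, lp.single_apply]
      · rw [hnat i j hij, e.repr_self, lp.single_apply, Pi.single_apply, if_neg hij, zero_smul]
    | zero => simp
    | add a b _ _ ha hb => simp [ha, hb, add_smul]
    | smul c a _ ha => simp [ha, smul_smul]
  have := Continuous.ext_on hdense h1 h2 key
  exact congrFun this y

theorem mul_mem_closure (mul : H →ₗ[ℂ] H →ₗ[ℂ] H)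
    (hcomm : ∀ x y : H, mul x y = mul y x)
    (hcont : ∀ x : H, Continuous fun y => mul x y)
    (e : HilbertBasis ℕ ℂ H)
    (hnat : ∀ i j : ℕ, i ≠ j → mul (e i) (e j) = 0)
    (ω : ℕ → ℕ → ℂ)
    (hω : ∀ i k : ℕ, ω i k = structConst mul e i k)
    (V : Set ℕ) (x y : H)
    (hx : x ∈ ((Submodule.span ℂ ((fun k : ℕ => e k) '' V)).topologicalClosure : Set H)) :
    mul x y ∈ ((Submodule.span ℂ
      ((fun k : ℕ => e k) '' {k | ∃ i ∈ V, ω i k ≠ 0})).topologicalClosure : Set H) := by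
  set M := (Submodule.span ℂ ((fun k : ℕ => e k) '' {k | ∃ i ∈ V, ω i k ≠ 0})).topologicalClosure
  have hfc : Continuous fun z : H => mul z y := by
    have : (fun z : H => mul z y) = fun z => mul y z := funext fun z => hcomm z y
    rw [this]; exact hcont y
  have hmaps : Set.MapsTo (fun z : H => mul z y)
      (Submodule.span ℂ ((fun k : ℕ => e k) '' V) : Set H) (M : Set H) := by
    intro z hz
    induction hz using Submodule.span_induction with
    | mem z hz =>
      obtain ⟨i, hi, rfl⟩ := hz
      show mul (e i) y ∈ (M : Set H)
      rw [mul_basis_eq mul hcont e hnat i y]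
      refine Submodule.smul_mem _ _ ?_
      refine Submodule.topologicalClosure_mono (Submodule.span_mono
        (Set.image_mono ?_)) (mem_closure_span_of_supp e {k | ω i k ≠ 0} _ fun k hk => ?_)
      · intro k hk; exact ⟨i, hi, hk⟩
      · simp only [Set.mem_setOf_eq, not_not] at hk
        rw [hω] at hk; exact hk
    | zero => simp only [map_zero, LinearMap.zero_apply]; exact Submodule.zero_mem M
    | add a b _ _ ha hb =>
      simp only [map_add, LinearMap.add_apply]; exact Submodule.add_mem M ha hb
    | smul c a _ ha =>
      simp only [map_smul, LinearMap.smul_apply]; exact Submodule.smul_mem M c ha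
  have := map_mem_closure hfc hx hmaps
  rwa [IsClosed.closure_eq (Submodule.isClosed_topologicalClosure _)] at this

/-- Let `𝒜` be a complex separable Hilbert evolution algebra with natural
orthonormal basis `{e i}` and structural constants `ω`. If `U ⊆ ℕ` and `I` is the closed
linear span of `{e k : k ∈ U}`, then for every `n ≥ 1`,
`I^{<n>} ⊆ closed linear span of {e k : k ∈ D^{n-1}(U)}`. -/
theorem stmt_7
    (mul : H →ₗ[ℂ] H →ₗ[ℂ] H)
    (hcomm : ∀ x y : H, mul x y = mul y x)
    (hcont : ∀ x : H, Continuous fun y => mul x y)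
    (e : HilbertBasis ℕ ℂ H)
    (hnat : ∀ i j : ℕ, i ≠ j → mul (e i) (e j) = 0)
    (ω : ℕ → ℕ → ℂ)
    (hω : ∀ i k : ℕ, ω i k = structConst mul e i k)
    (U : Set ℕ) :
    ∀ n : ℕ, 1 ≤ n →
      setPow mul ((Submodule.span ℂ ((fun k : ℕ => e k) '' U)).topologicalClosure : Set H) n ⊆
        ((Submodule.span ℂ ((fun k : ℕ => e k) '' DsetU ω (n - 1) U)).topologicalClosure :
          Set H) := by
  intro n hn
  induction n with
  | zero => omega
  | succ m ih =>
    match m, ih with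
    | 0, _ =>
      intro v hv
      exact hv
    | m + 1, ih =>
      intro v hv
      obtain ⟨m', x, y, hx, hy, rfl⟩ := hv
      refine Submodule.sum_mem _ fun j _ => ?_
      have hxj := ih (by omega) (hx j)
      have key := mul_mem_closure mul hcomm hcont e hnat ω hω
        (DsetU ω (m + 1 - 1) U) (x j) (y j) hxj
      have : {k | ∃ i ∈ DsetU ω (m + 1 - 1) U, ω i k ≠ 0} = DsetU ω (m + 2 - 1) U := by
        simp only [Nat.add_sub_cancel]
        rfl
      rwa [this] at key

end
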